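/- Let S be a finite set and F = {A_i : i ∈ I} a finite family of subsets of S such that each element of S appears in at most two members of F. Suppose for distinct i, j the intersection A_i ∩ A_j has at most one element. Construct a graph G on vertex set I with i adjacent to j iff A_i ∩ A_j ≠ ∅ (i ≠ j), and let U ⊆ I be the set of indices i such that every element of A_i lies in exactly two members of F. Then there exists C ⊆ S with |C ∩ A_i| = 1 for every i ∈ I if and only if G has a matching saturating U. -/

import Mathlib

theorem stmt_16 {I S : Type*} [Fintype I] [Fintype S] [DecidableEq I] [DecidableEq S]
    (A : I → Finset S)
    (hne : ∀ i : I, (A i).Nonempty)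
    (htwo : ∀ s : S, ({i : I | s ∈ A i}).ncard ≤ 2)
    (hone : ∀ i j : I, i ≠ j → (A i ∩ A j).card ≤ 1) :
    (∃ C : Finset S, ∀ i : I, (C ∩ A i).card = 1) ↔
    (∃ M : (SimpleGraph.fromRel (fun i j : I => (A i ∩ A j).Nonempty)).Subgraph,
      M.IsMatching ∧
      {i : I | ∀ s ∈ A i, ({j : I | s ∈ A j}).ncard = 2} ⊆ M.verts) := by
  classical
  set G := SimpleGraph.fromRel (fun i j : I => (A i ∩ A j).Nonempty) with hG
  -- helper: three distinct indices containing a common element is impossible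
  have h3 : ∀ (s : S) (a b c : I), a ≠ b → a ≠ c → b ≠ c →
      s ∈ A a → s ∈ A b → s ∈ A c → False := by
    intro s a b c hab hac hbc ha hb hc
    have hsub : ({a, b, c} : Set I) ⊆ {j : I | s ∈ A j} := by
      intro x hx
      simp only [Set.mem_insert_iff, Set.mem_singleton_iff] at hx
      rcases hx with rfl | rfl | rfl <;> assumption
    have h3' : ({a, b, c} : Set I).ncard = 3 :=
      Set.ncard_eq_three.mpr ⟨a, b, c, hab, hac, hbc, rfl⟩
    have := Set.ncard_le_ncard hsub (Set.toFinite _)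
    have := htwo s
    omega
  constructor
  · rintro ⟨C, hC⟩
    choose c hc using fun i => Finset.card_eq_one.mp (hC i)
    have hcC : ∀ i, c i ∈ C := by
      intro i
      have : c i ∈ C ∩ A i := by rw [hc i]; exact Finset.mem_singleton_self _
      exact (Finset.mem_inter.mp this).1
    have hcA : ∀ i, c i ∈ A i := by
      intro i
      have : c i ∈ C ∩ A i := by rw [hc i]; exact Finset.mem_singleton_self _
      exact (Finset.mem_inter.mp this).2
    have hcu : ∀ i s, s ∈ C → s ∈ A i → s = c i := by
      intro i s hs hs'
      have : s ∈ C ∩ A i := Finset.mem_inter.mpr ⟨hs, hs'⟩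
      rw [hc i] at this; exact Finset.mem_singleton.mp this
    set U : Set I := {i : I | ∀ s ∈ A i, ({j : I | s ∈ A j}).ncard = 2} with hU
    set R : I → I → Prop := fun x y => x ≠ y ∧ c x = c y ∧ (x ∈ U ∨ y ∈ U) with hR
    have hRsymm : ∀ x y, R x y → R y x := by
      rintro x y ⟨h1, h2, h3⟩
      exact ⟨h1.symm, h2.symm, h3.symm⟩
    have hRG : ∀ x y, R x y → G.Adj x y := by
      rintro x y ⟨hxy, hcxy, -⟩
      rw [hG, SimpleGraph.fromRel_adj]
      refine ⟨hxy, Or.inl ⟨c x, Finset.mem_inter.mpr ⟨hcA x, hcxy ▸ hcA y⟩⟩⟩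
    refine ⟨⟨{x | ∃ y, R x y}, R, fun {x y} h => hRG x y h,
      fun {x y} h => ⟨y, h⟩, ⟨fun x y h => hRsymm x y h⟩⟩, ?_, ?_⟩
    · intro v hv
      obtain ⟨y, hy⟩ := hv
      refine ⟨y, hy, ?_⟩
      intro y' hy'
      by_contra hne'
      obtain ⟨hvy, hcy, -⟩ := hy
      obtain ⟨hvy', hcy', -⟩ := hy'
      exact h3 (c v) v y y' hvy hvy' (Ne.symm hne') (hcA v) (hcy ▸ hcA y) (hcy' ▸ hcA y')
    · intro i hi
      have h2 : ({j : I | c i ∈ A j}).ncard = 2 := hi (c i) (hcA i)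
      obtain ⟨a, b, hab, hset⟩ := Set.ncard_eq_two.mp h2
      have hiab : i ∈ ({a, b} : Set I) := by rw [← hset]; exact hcA i
      -- the other index
      obtain rfl | rfl := hiab
      · have hb : c i ∈ A b := by
          have : b ∈ ({i, b} : Set I) := Or.inr rfl
          rw [← hset] at this; exact this
        have : c i = c b := hcu b (c i) (hcC i) hb
        exact ⟨b, hab, this, Or.inl hi⟩
      · have ha : c i ∈ A a := by
          have : a ∈ ({a, i} : Set I) := Or.inl rfl
          rw [← hset] at this; exact this
        have : c i = c a := hcu a (c i) (hcC i) ha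
        exact ⟨a, hab.symm, this, Or.inl hi⟩
  · rintro ⟨M, hM, hU⟩
    -- partner function
    have hmex : ∀ i, ∃ j, (i ∈ M.verts → M.Adj i j ∧ ∀ k, M.Adj i k → k = j) ∧
        (i ∉ M.verts → j = i) := by
      intro i
      by_cases hi : i ∈ M.verts
      · obtain ⟨j, hj, huniq⟩ := hM hi
        exact ⟨j, fun _ => ⟨hj, huniq⟩, fun h => absurd hi h⟩
      · exact ⟨i, fun h => absurd h hi, fun _ => rfl⟩
    choose m hm1 hm2 using hmex
    have hmadj : ∀ i, i ∈ M.verts → M.Adj i (m i) := fun i hi => (hm1 i hi).1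
    have hmu : ∀ i, i ∈ M.verts → ∀ k, M.Adj i k → k = m i := fun i hi => (hm1 i hi).2
    have hmv : ∀ i, i ∈ M.verts → m i ∈ M.verts := fun i hi =>
      M.edge_vert (hmadj i hi).symm
    have hmne : ∀ i, i ∈ M.verts → i ≠ m i := by
      intro i hi
      have := M.adj_sub (hmadj i hi)
      exact this.ne
    have hmm : ∀ i, i ∈ M.verts → m (m i) = i := by
      intro i hi
      exact (hmu (m i) (hmv i hi) i (hmadj i hi).symm).symm
    -- for matched vertices, the intersection with the partner is a singleton
    have hcard : ∀ i, i ∈ M.verts → (A i ∩ A (m i)).card = 1 := by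
      intro i hi
      have hadj := M.adj_sub (hmadj i hi)
      rw [hG, SimpleGraph.fromRel_adj] at hadj
      obtain ⟨hne', hor⟩ := hadj
      have hnonempty : (A i ∩ A (m i)).Nonempty := by
        rcases hor with h | h
        · exact h
        · rw [Finset.inter_comm]; exact h
      have h1 := hone i (m i) hne'
      have h2 := Finset.card_pos.mpr hnonempty
      omega
    -- choose the representative element
    have hsex : ∀ i, ∃ s, (i ∈ M.verts → A i ∩ A (m i) = {s}) ∧
        (i ∉ M.verts → s ∈ A i ∧ ∀ j, s ∈ A j → j = i) := by
      intro i
      by_cases hi : i ∈ M.verts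
      · obtain ⟨s, hs⟩ := Finset.card_eq_one.mp (hcard i hi)
        exact ⟨s, fun _ => hs, fun h => absurd hi h⟩
      · have hiU : i ∉ {i : I | ∀ s ∈ A i, ({j : I | s ∈ A j}).ncard = 2} :=
          fun h => hi (hU h)
        simp only [Set.mem_setOf_eq, not_forall] at hiU
        obtain ⟨s, hsA, hs2⟩ := hiU
        have hle := htwo s
        have hpos : 0 < ({j : I | s ∈ A j}).ncard :=
          Set.ncard_pos (Set.toFinite _) |>.mpr ⟨i, hsA⟩
        have h1 : ({j : I | s ∈ A j}).ncard = 1 := by omega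
        obtain ⟨a, ha⟩ := Set.ncard_eq_one.mp h1
        have hia : i = a := by
          have : i ∈ ({a} : Set I) := ha ▸ hsA
          exact this
        refine ⟨s, fun h => absurd h hi, fun _ => ⟨hsA, ?_⟩⟩
        intro j hj
        have : j ∈ ({a} : Set I) := ha ▸ hj
        rw [this, ← hia]
    choose σ hσ1 hσ2 using hsex
    have hσA : ∀ i, σ i ∈ A i := by
      intro i
      by_cases hi : i ∈ M.verts
      · have := hσ1 i hi
        have hmem : σ i ∈ A i ∩ A (m i) := by rw [this]; exact Finset.mem_singleton_self _
        exact (Finset.mem_inter.mp hmem).1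
      · exact (hσ2 i hi).1
    -- key: any σ j landing in A i equals σ i
    have hkey : ∀ i j, σ j ∈ A i → σ j = σ i := by
      intro i j hji
      by_cases hj : j ∈ M.verts
      · have hmemj : σ j ∈ A j ∩ A (m j) := by
          rw [hσ1 j hj]; exact Finset.mem_singleton_self _
        obtain ⟨hjA, hjmA⟩ := Finset.mem_inter.mp hmemj
        by_cases hij : i = j
        · rw [hij]
        by_cases himj : i = m j
        · -- σ j is in A i ∩ A (m i) = A (m j) ∩ A j
          have hiv : i ∈ M.verts := himj ▸ hmv j hj
          have hmi : m i = j := by rw [himj, hmm j hj]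
          have : σ j ∈ A i ∩ A (m i) := by
            rw [hmi]; exact Finset.mem_inter.mpr ⟨hji, hjA⟩
          rw [hσ1 i hiv] at this
          exact Finset.mem_singleton.mp this
        · exact absurd (h3 (σ j) i j (m j) hij himj (hmne j hj) hji hjA hjmA) not_false
      · have := (hσ2 j hj).2 i hji
        rw [this]
    refine ⟨Finset.univ.image σ, ?_⟩
    intro i
    have : Finset.univ.image σ ∩ A i = {σ i} := by
      apply Finset.ext
      intro s
      simp only [Finset.mem_inter, Finset.mem_image, Finset.mem_univ, true_and,
        Finset.mem_singleton]
      constructor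
      · rintro ⟨⟨j, rfl⟩, hs⟩
        exact hkey i j hs
      · rintro rfl
        exact ⟨⟨i, rfl⟩, hσA i⟩
    rw [this, Finset.card_singleton]
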